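/- Let G be a finite simple graph with oriented edges and triangles. The space ℝ^E of edge vectors admits an orthogonal decomposition ℝ^E = im(B) ⊕ ker(H) ⊕ im(Cᵀ), where H = B·Bᵀ + Cᵀ·C is the Helmholtzian matrix (graph Helmholtz decomposition). -/

import Mathlib

open Matrix

/-- A finite simple graph together with arbitrary orientations on its edges
(indexed by `E`, each with a tail and a head) and on its triangles
(indexed by `T`, each given as a cyclic triple of vertices). -/
structure GraphData (V E T : Type*) where
  G : SimpleGraph V
  tail : E → V
  head : E → V
  tri1 : T → V
  tri2 : T → V
  tri3 : T → V
  edge_adj : ∀ e, G.Adj (tail e) (head e)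
  edge_inj : ∀ e e' : E, s(tail e, head e) = s(tail e', head e') → e = e'
  edge_surj : ∀ a b, G.Adj a b → ∃ e, s(tail e, head e) = s(a, b)
  tri_adj12 : ∀ τ, G.Adj (tri1 τ) (tri2 τ)
  tri_adj23 : ∀ τ, G.Adj (tri2 τ) (tri3 τ)
  tri_adj31 : ∀ τ, G.Adj (tri3 τ) (tri1 τ)
  tri_inj : ∀ τ τ' : T, ({tri1 τ, tri2 τ, tri3 τ} : Set V) = {tri1 τ', tri2 τ', tri3 τ'} → τ = τ'
  tri_surj : ∀ a b c, G.Adj a b → G.Adj b c → G.Adj c a →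
    ∃ τ, ({tri1 τ, tri2 τ, tri3 τ} : Set V) = {a, b, c}

variable {V E T : Type*}

/-- The signed edge-vertex incidence matrix `B`. -/
def Bmat [DecidableEq V] (D : GraphData V E T) : Matrix E V ℝ := fun e v =>
  if v = D.head e then 1 else if v = D.tail e then -1 else 0

/-- The signed triangle-edge incidence matrix `C`. -/
def Cmat [DecidableEq V] (D : GraphData V E T) : Matrix T E ℝ := fun τ e =>
  if (D.tail e, D.head e) = (D.tri1 τ, D.tri2 τ) ∨ (D.tail e, D.head e) = (D.tri2 τ, D.tri3 τ) ∨
      (D.tail e, D.head e) = (D.tri3 τ, D.tri1 τ) then 1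
  else if (D.head e, D.tail e) = (D.tri1 τ, D.tri2 τ) ∨ (D.head e, D.tail e) = (D.tri2 τ, D.tri3 τ) ∨
      (D.head e, D.tail e) = (D.tri3 τ, D.tri1 τ) then -1
  else 0

/-- The Helmholtzian matrix `H = B * Bᵀ + Cᵀ * C`. -/
def Hmat [DecidableEq V] [Fintype V] [Fintype T] (D : GraphData V E T) : Matrix E E ℝ :=
  Bmat D * (Bmat D)ᵀ + (Cmat D)ᵀ * Cmat D

/-- The nullity of the Helmholtzian matrix, i.e. the dimension of its kernel. -/
noncomputable def nullity [DecidableEq V] [Fintype V] [Fintype T] [Fintype E]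
    (D : GraphData V E T) : ℕ :=
  Module.finrank ℝ ↥(LinearMap.ker (Hmat D).mulVecLin)

/-- The edge `e` lies in the triangle `τ`. -/
def edgeInTri (D : GraphData V E T) (e : E) (τ : T) : Prop :=
  D.tail e ∈ ({D.tri1 τ, D.tri2 τ, D.tri3 τ} : Set V) ∧
  D.head e ∈ ({D.tri1 τ, D.tri2 τ, D.tri3 τ} : Set V)

/-- The triangle degree of an edge: the number of triangles containing it. -/
def triDeg [DecidableEq V] [Fintype T] (D : GraphData V E T) (e : E) : ℕ :=
  (Finset.univ.filter fun τ =>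
    D.tail e ∈ ({D.tri1 τ, D.tri2 τ, D.tri3 τ} : Finset V) ∧
    D.head e ∈ ({D.tri1 τ, D.tri2 τ, D.tri3 τ} : Finset V)).card

section helpers

variable {V E T : Type*}

lemma key_entry [DecidableEq V] (D : GraphData V E T) (τ : T) (e : E) (v : V) (a b : V)
    (hab : (a, b) = (D.tri1 τ, D.tri2 τ) ∨ (a, b) = (D.tri2 τ, D.tri3 τ) ∨
      (a, b) = (D.tri3 τ, D.tri1 τ))
    (he : s(D.tail e, D.head e) = s(a, b)) :
    Cmat D τ e * Bmat D e v = (if v = b then 1 else 0) - (if v = a then 1 else 0) := by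
  have h12 := (D.tri_adj12 τ).ne
  have h23 := (D.tri_adj23 τ).ne
  have h31 := (D.tri_adj31 τ).ne
  rw [Sym2.eq_iff] at he
  rcases he with ⟨ht, hh⟩ | ⟨ht, hh⟩
  · have hC : Cmat D τ e = 1 := by
      unfold Cmat
      rw [if_pos]
      rcases hab with h | h | h <;> simp_all [Prod.ext_iff]
    have hab' : a ≠ b := by rcases hab with h | h | h <;> simp_all [Prod.ext_iff]
    rw [hC]; unfold Bmat
    rw [hh, ht]
    by_cases hvb : v = b <;> by_cases hva : v = a <;> simp_all
  · have hC : Cmat D τ e = -1 := by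
      unfold Cmat
      rw [if_neg, if_pos]
      · rcases hab with h | h | h <;> simp_all [Prod.ext_iff]
      · simp only [Prod.mk.injEq, not_or, not_and, ht, hh]
        rcases hab with h | h | h <;> rw [Prod.mk.injEq] at h <;>
          obtain ⟨rfl, rfl⟩ := h <;>
          refine ⟨fun h1 h2 => ?_, fun h1 h2 => ?_, fun h1 h2 => ?_⟩ <;> grind
    have hab' : a ≠ b := by rcases hab with h | h | h <;> simp_all [Prod.ext_iff]
    rw [hC]; unfold Bmat
    rw [hh, ht]
    by_cases hvb : v = b <;> by_cases hva : v = a <;> simp_all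

lemma dp_nonneg {n : Type*} [Fintype n] (v : n → ℝ) : 0 ≤ v ⬝ᵥ v :=
  Finset.sum_nonneg fun _ _ => mul_self_nonneg _

lemma dot_sq {m n : Type*} [Fintype m] [Fintype n] (M : Matrix m n ℝ) (x : m → ℝ) :
    x ⬝ᵥ (M * Mᵀ) *ᵥ x = (Mᵀ *ᵥ x) ⬝ᵥ (Mᵀ *ᵥ x) := by
  rw [← Matrix.mulVec_mulVec, Matrix.dotProduct_mulVec, ← Matrix.mulVec_transpose]

lemma CB_zero [DecidableEq V] [DecidableEq E] [Fintype V] [Fintype E]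
    (D : GraphData V E T) : Cmat D * Bmat D = 0 := by
  ext τ v
  have h12 := (D.tri_adj12 τ).ne
  have h23 := (D.tri_adj23 τ).ne
  have h31 := (D.tri_adj31 τ).ne
  obtain ⟨e1, he1⟩ := D.edge_surj _ _ (D.tri_adj12 τ)
  obtain ⟨e2, he2⟩ := D.edge_surj _ _ (D.tri_adj23 τ)
  obtain ⟨e3, he3⟩ := D.edge_surj _ _ (D.tri_adj31 τ)
  have h1 := key_entry D τ e1 v _ _ (Or.inl rfl) he1
  have h2 := key_entry D τ e2 v _ _ (Or.inr (Or.inl rfl)) he2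
  have h3 := key_entry D τ e3 v _ _ (Or.inr (Or.inr rfl)) he3
  have hd12 : e1 ≠ e2 := by
    intro h; rw [h, he2, Sym2.eq_iff] at he1; tauto
  have hd13 : e1 ≠ e3 := by
    intro h; rw [h, he3, Sym2.eq_iff] at he1; tauto
  have hd23 : e2 ≠ e3 := by
    intro h; rw [h, he3, Sym2.eq_iff] at he2; tauto
  have hzero : ∀ e ∈ Finset.univ, e ∉ ({e1, e2, e3} : Finset E) →
      Cmat D τ e * Bmat D e v = 0 := by
    intro e _ he
    simp only [Finset.mem_insert, Finset.mem_singleton, not_or] at he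
    obtain ⟨g1, g2, g3⟩ := he
    rcases eq_or_ne (Cmat D τ e) 0 with hc | hc
    · rw [hc, zero_mul]
    · exfalso
      unfold Cmat at hc
      split_ifs at hc with hA hB
      · rcases hA with h | h | h
        · exact g1 (D.edge_inj e e1 (by rw [he1, Sym2.eq_iff]; left; exact Prod.mk.injEq .. ▸ (by simpa [Prod.ext_iff] using h)))
        · exact g2 (D.edge_inj e e2 (by rw [he2, Sym2.eq_iff]; left; simpa [Prod.ext_iff] using h))
        · exact g3 (D.edge_inj e e3 (by rw [he3, Sym2.eq_iff]; left; simpa [Prod.ext_iff] using h))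
      · rcases hB with h | h | h
        · exact g1 (D.edge_inj e e1 (by rw [he1, Sym2.eq_iff]; right; simpa [Prod.ext_iff, and_comm] using h))
        · exact g2 (D.edge_inj e e2 (by rw [he2, Sym2.eq_iff]; right; simpa [Prod.ext_iff, and_comm] using h))
        · exact g3 (D.edge_inj e e3 (by rw [he3, Sym2.eq_iff]; right; simpa [Prod.ext_iff, and_comm] using h))
      · exact hc rfl
  have : (Cmat D * Bmat D) τ v = ∑ e ∈ ({e1, e2, e3} : Finset E), Cmat D τ e * Bmat D e v := by
    rw [Matrix.mul_apply]
    exact (Finset.sum_subset (Finset.subset_univ _) hzero).symm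
  rw [this]
  rw [Finset.sum_insert (by simp [hd12, hd13]), Finset.sum_insert (by simp [hd23]),
    Finset.sum_singleton, h1, h2, h3]
  simp only [Matrix.zero_apply]
  ring

end helpers

theorem helmholtz_decomposition [DecidableEq V] [Fintype V] [Fintype E] [Fintype T]
    (D : GraphData V E T) :
    (LinearMap.range (Bmat D).mulVecLin ⊔ LinearMap.ker (Hmat D).mulVecLin ⊔
        LinearMap.range ((Cmat D)ᵀ).mulVecLin = ⊤) ∧
    (∀ x ∈ LinearMap.range (Bmat D).mulVecLin, ∀ y ∈ LinearMap.ker (Hmat D).mulVecLin,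
      x ⬝ᵥ y = 0) ∧
    (∀ x ∈ LinearMap.range (Bmat D).mulVecLin, ∀ y ∈ LinearMap.range ((Cmat D)ᵀ).mulVecLin,
      x ⬝ᵥ y = 0) ∧
    (∀ x ∈ LinearMap.ker (Hmat D).mulVecLin, ∀ y ∈ LinearMap.range ((Cmat D)ᵀ).mulVecLin,
      x ⬝ᵥ y = 0) := by

  classical
  set B := Bmat D with hB
  set C := Cmat D with hC
  have hCB : C * B = 0 := CB_zero D
  -- ker H characterization
  have hker : ∀ x, Hmat D *ᵥ x = 0 → (Bᵀ *ᵥ x = 0 ∧ C *ᵥ x = 0) := by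
    intro x hx
    have h0 : x ⬝ᵥ (Hmat D *ᵥ x) = 0 := by rw [hx, dotProduct_zero]
    have e1 := dot_sq B x
    have e2 := dot_sq Cᵀ x
    rw [Matrix.transpose_transpose] at e2
    have hsplit : x ⬝ᵥ (Hmat D *ᵥ x) = (Bᵀ *ᵥ x) ⬝ᵥ (Bᵀ *ᵥ x) + (C *ᵥ x) ⬝ᵥ (C *ᵥ x) := by
      rw [Hmat, Matrix.add_mulVec, dotProduct_add, e1, e2]
    rw [hsplit] at h0
    have h1 : (Bᵀ *ᵥ x) ⬝ᵥ (Bᵀ *ᵥ x) = 0 ∧ (C *ᵥ x) ⬝ᵥ (C *ᵥ x) = 0 := by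
      constructor <;> nlinarith [dp_nonneg (Bᵀ *ᵥ x), dp_nonneg (C *ᵥ x)]
    exact ⟨(dotProduct_self_eq_zero).mp h1.1, (dotProduct_self_eq_zero).mp h1.2⟩
  -- orthogonality facts
  have orth1 : ∀ x ∈ LinearMap.range B.mulVecLin, ∀ y ∈ LinearMap.ker (Hmat D).mulVecLin,
      x ⬝ᵥ y = 0 := by
    rintro x ⟨u, rfl⟩ y hy
    have := (hker y hy).1
    rw [Matrix.mulVecLin_apply, dotProduct_comm, Matrix.dotProduct_mulVec,
      ← Matrix.mulVec_transpose, this, zero_dotProduct]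
  have orth2 : ∀ x ∈ LinearMap.range B.mulVecLin, ∀ y ∈ LinearMap.range (Cᵀ).mulVecLin,
      x ⬝ᵥ y = 0 := by
    rintro x ⟨u, rfl⟩ y ⟨w, rfl⟩
    simp only [Matrix.mulVecLin_apply]
    rw [Matrix.dotProduct_mulVec, ← Matrix.mulVec_transpose, Matrix.mulVec_mulVec,
      Matrix.transpose_transpose, hCB]
    simp
  have orth3 : ∀ x ∈ LinearMap.ker (Hmat D).mulVecLin, ∀ y ∈ LinearMap.range (Cᵀ).mulVecLin,
      x ⬝ᵥ y = 0 := by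
    rintro x hx y ⟨w, rfl⟩
    have := (hker x hx).2
    rw [Matrix.mulVecLin_apply, Matrix.dotProduct_mulVec, ← Matrix.mulVec_transpose,
      Matrix.transpose_transpose, this, zero_dotProduct]
  refine ⟨?_, orth1, orth2, orth3⟩
  -- sup = top
  have hHsym : (Hmat D)ᵀ = Hmat D := by
    rw [Hmat]; simp [Matrix.transpose_add, Matrix.transpose_mul]
  have hdisj : LinearMap.range (Hmat D).mulVecLin ⊓ LinearMap.ker (Hmat D).mulVecLin = ⊥ := by
    rw [Submodule.eq_bot_iff]
    rintro x ⟨⟨u, rfl⟩, hk⟩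
    simp only [SetLike.mem_coe, LinearMap.mem_ker, Matrix.mulVecLin_apply] at hk
    have : (Hmat D *ᵥ u) ⬝ᵥ (Hmat D *ᵥ u) = 0 := by
      rw [Matrix.dotProduct_mulVec, ← Matrix.mulVec_transpose, hHsym, hk, zero_dotProduct]
    exact dotProduct_self_eq_zero.mp this
  have hrank : LinearMap.range (Hmat D).mulVecLin ⊔ LinearMap.ker (Hmat D).mulVecLin = ⊤ := by
    apply Submodule.eq_top_of_finrank_eq
    have h1 := Submodule.finrank_sup_add_finrank_inf_eq
      (LinearMap.range (Hmat D).mulVecLin) (LinearMap.ker (Hmat D).mulVecLin)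
    rw [hdisj] at h1
    have h2 := LinearMap.finrank_range_add_finrank_ker (Hmat D).mulVecLin
    simp only [finrank_bot, add_zero] at h1
    rw [h1, h2]
  have hsub : LinearMap.range (Hmat D).mulVecLin ≤
      LinearMap.range B.mulVecLin ⊔ LinearMap.range (Cᵀ).mulVecLin := by
    rintro x ⟨u, rfl⟩
    rw [Matrix.mulVecLin_apply, Hmat, Matrix.add_mulVec, ← Matrix.mulVec_mulVec,
      ← Matrix.mulVec_mulVec]
    exact Submodule.add_mem_sup ⟨_, rfl⟩ ⟨_, rfl⟩
  rw [eq_top_iff, ← hrank, sup_le_iff]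
  constructor
  · refine le_trans hsub ?_
    rw [sup_le_iff]
    exact ⟨le_sup_of_le_left le_sup_left, le_sup_right⟩
  · exact le_sup_of_le_left le_sup_right
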